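/- Let A, B, C be n×n Hermitian positive definite matrices such that the eigenvalues of AC^{−1} are E-dominated by those of BC^{−1}, i.e., e_k(λ(AC^{−1})) ≤ e_k(λ(BC^{−1})) for k = 1,…,n−1 and det(AC^{−1}) = det(BC^{−1}). Then δ_R(A,C) ≤ δ_R(B,C), where δ_R(X,Y) = ‖log(Y^{−1/2} X Y^{−1/2})‖_F is the affine-invariant Riemannian distance on positive definite matrices. -/

import Mathlib

open Finset Real Matrix
open scoped ComplexOrder


noncomputable def esymm (n k : ℕ) (x : Fin n → ℝ) : ℝ :=
  ∑ s ∈ Finset.powersetCard k (Finset.univ : Finset (Fin n)), ∏ i ∈ s, x i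

/-- The square root of a positive semidefinite matrix, as `Matrix.PosSemidef.sqrt` was defined in
Mathlib (removed since). -/
noncomputable def Matrix.PosSemidef.sqrt {m : Type*} [Fintype m] [DecidableEq m] {𝕜 : Type*} [RCLike 𝕜]
    {M : Matrix m m 𝕜} (hM : M.PosSemidef) : Matrix m m 𝕜 :=
  hM.1.eigenvectorUnitary.1 * diagonal ((↑) ∘ (√·) ∘ hM.1.eigenvalues) *
    (star hM.1.eigenvectorUnitary : Matrix m m 𝕜)

lemma Matrix.PosSemidef.posSemidef_sqrt {m : Type*} [Fintype m] [DecidableEq m] {𝕜 : Type*}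
    [RCLike 𝕜] {M : Matrix m m 𝕜} (hM : M.PosSemidef) : hM.sqrt.PosSemidef := by
  unfold Matrix.PosSemidef.sqrt
  have hd : (diagonal ((↑) ∘ (√·) ∘ hM.1.eigenvalues) : Matrix m m 𝕜).PosSemidef :=
    PosSemidef.diagonal (fun i => by
      simp only [Function.comp, Pi.zero_apply]
      exact RCLike.ofReal_nonneg.mpr (Real.sqrt_nonneg _))
  have := hd.mul_mul_conjTranspose_same (hM.1.eigenvectorUnitary.1)
  simpa [star_eq_conjTranspose] using this

lemma Matrix.PosSemidef.sqrt_mul_self {m : Type*} [Fintype m] [DecidableEq m] {𝕜 : Type*}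
    [RCLike 𝕜] {M : Matrix m m 𝕜} (hM : M.PosSemidef) : hM.sqrt * hM.sqrt = M := by
  unfold Matrix.PosSemidef.sqrt
  have hU : (star hM.1.eigenvectorUnitary : Matrix m m 𝕜) * hM.1.eigenvectorUnitary.1 = 1 :=
    Unitary.coe_star_mul_self _
  have hD : (diagonal ((↑) ∘ (√·) ∘ hM.1.eigenvalues) : Matrix m m 𝕜) *
      diagonal ((↑) ∘ (√·) ∘ hM.1.eigenvalues) = diagonal (RCLike.ofReal ∘ hM.1.eigenvalues) := by
    rw [diagonal_mul_diagonal]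
    congr 1
    funext i
    simp only [Function.comp]
    rw [← RCLike.ofReal_mul, Real.mul_self_sqrt (hM.eigenvalues_nonneg i)]
  conv_rhs => rw [hM.1.spectral_theorem, Unitary.conjStarAlgAut_apply]
  calc _ = hM.1.eigenvectorUnitary.1 * diagonal ((↑) ∘ (√·) ∘ hM.1.eigenvalues) *
        ((star hM.1.eigenvectorUnitary : Matrix m m 𝕜) * hM.1.eigenvectorUnitary.1) *
        diagonal ((↑) ∘ (√·) ∘ hM.1.eigenvalues) *
        (star hM.1.eigenvectorUnitary : Matrix m m 𝕜) := by simp only [Matrix.mul_assoc]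
    _ = _ := by rw [hU, Matrix.mul_one, Matrix.mul_assoc _ (diagonal _) (diagonal _), hD]

lemma esymm_zero' (n : ℕ) (x : Fin n → ℝ) : esymm n 0 x = 1 := by
  simp [esymm]

lemma esymm_top (n : ℕ) (x : Fin n → ℝ) : esymm n n x = ∏ i, x i := by
  have h : Finset.powersetCard n (Finset.univ : Finset (Fin n)) = {Finset.univ} := by
    simpa using Finset.powersetCard_self (Finset.univ : Finset (Fin n))
  rw [esymm, h, Finset.sum_singleton]

lemma prod_add_expand (n : ℕ) (x : Fin n → ℝ) (t : ℝ) :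
    ∏ i, (x i + t) = ∑ k ∈ range (n+1), esymm n k x * t ^ (n - k) := by
  rw [Finset.prod_add, Finset.powerset_card_disjiUnion]
  erw [Finset.sum_disjiUnion]
  rw [show (Finset.univ : Finset (Fin n)).card = n by simp]
  refine Finset.sum_congr rfl fun k hk => ?_
  rw [esymm, Finset.sum_mul]
  refine Finset.sum_congr rfl fun p hp => ?_
  have hpc : p.card = k := (Finset.mem_powersetCard.mp hp).2
  rw [Finset.prod_const, Finset.card_sdiff_of_subset (Finset.subset_univ p), hpc,
    show (Finset.univ : Finset (Fin n)).card = n by simp]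

lemma prod_add_le (n : ℕ) (a b : Fin n → ℝ)
    (hE : ∀ k, 1 ≤ k → k ≤ n - 1 → esymm n k a ≤ esymm n k b)
    (hprod : ∏ i, a i = ∏ i, b i) {t : ℝ} (ht : 0 ≤ t) :
    ∏ i, (a i + t) ≤ ∏ i, (b i + t) := by
  rw [prod_add_expand, prod_add_expand]
  refine Finset.sum_le_sum fun k hk => ?_
  rcases Nat.eq_zero_or_pos k with rfl | hk1
  · rw [esymm_zero', esymm_zero']
  rcases eq_or_ne k n with rfl | hkn
  · rw [esymm_top, esymm_top, hprod]
  have hkn' : k ≤ n - 1 := by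
    have : k < n + 1 := Finset.mem_range.mp hk
    omega
  exact mul_le_mul_of_nonneg_right (hE k hk1 hkn') (pow_nonneg ht _)

lemma prod_add_inv_le (n : ℕ) (a b : Fin n → ℝ) (ha : ∀ i, 0 < a i) (hb : ∀ i, 0 < b i)
    (hE : ∀ k, 1 ≤ k → k ≤ n - 1 → esymm n k a ≤ esymm n k b)
    (hprod : ∏ i, a i = ∏ i, b i) {t : ℝ} (ht : 0 ≤ t) :
    ∏ i, ((a i)⁻¹ + t) ≤ ∏ i, ((b i)⁻¹ + t) := by
  rcases eq_or_lt_of_le ht with rfl | ht'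
  · refine le_of_eq ?_
    simp only [add_zero]
    rw [Finset.prod_inv_distrib, Finset.prod_inv_distrib, hprod]
  have key : ∀ (x : Fin n → ℝ), (∀ i, 0 < x i) →
      ∏ i, ((x i)⁻¹ + t) = (t ^ n * ∏ i, (x i + t⁻¹)) * (∏ i, x i)⁻¹ := by
    intro x hx
    calc ∏ i, ((x i)⁻¹ + t) = ∏ i, (t * (x i + t⁻¹) * (x i)⁻¹) := by
          refine Finset.prod_congr rfl fun i _ => ?_
          have h1 := (hx i).ne'
          have h2 := ht'.ne'
          field_simp
          ring
      _ = (∏ i, (t * (x i + t⁻¹))) * ∏ i, (x i)⁻¹ := Finset.prod_mul_distrib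
      _ = ((∏ _i : Fin n, t) * ∏ i, (x i + t⁻¹)) * (∏ i, x i)⁻¹ := by
          rw [Finset.prod_mul_distrib, Finset.prod_inv_distrib]
      _ = (t ^ n * ∏ i, (x i + t⁻¹)) * (∏ i, x i)⁻¹ := by simp
  rw [key a ha, key b hb, hprod]
  have hbp : (0:ℝ) ≤ (∏ i, b i)⁻¹ := by
    have : (0:ℝ) < ∏ i, b i := Finset.prod_pos fun i _ => hb i
    positivity
  refine mul_le_mul_of_nonneg_right ?_ hbp
  exact mul_le_mul_of_nonneg_left
    (prod_add_le n a b hE hprod (by positivity)) (by positivity)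

section Analysis
open MeasureTheory Filter

noncomputable def phi (x t : ℝ) : ℝ :=
  (Real.log (t + x) + Real.log (t + x⁻¹) - 2 * Real.log (t + 1)) / t

lemma phi_bounds {x t : ℝ} (hx : 0 < x) (ht : 0 < t) :
    0 ≤ phi x t ∧ phi x t ≤ (x + x⁻¹ - 2) * ((t + 1) ^ 2)⁻¹ := by
  have hx' := hx.ne'
  have ht1 : (0:ℝ) < t + 1 := by linarith
  have htx : (0:ℝ) < t + x := by linarith
  have htxi : (0:ℝ) < t + x⁻¹ := by positivity
  have hc : 0 ≤ x + x⁻¹ - 2 := by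
    have h1 : x * (x + x⁻¹ - 2) = (x - 1) ^ 2 := by field_simp; ring
    nlinarith [sq_nonneg (x - 1)]
  set u : ℝ := (x + x⁻¹ - 2) * t / (t + 1) ^ 2 with hu
  have hu0 : 0 ≤ u := by positivity
  have hlog : Real.log (t + x) + Real.log (t + x⁻¹) - 2 * Real.log (t + 1)
      = Real.log (1 + u) := by
    rw [← Real.log_mul htx.ne' htxi.ne']
    have h2 : 2 * Real.log (t + 1) = Real.log ((t + 1) ^ 2) := by
      rw [Real.log_pow]; push_cast; ring
    rw [h2, ← Real.log_div (by positivity) (by positivity)]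
    have key : (t + x) * (t + x⁻¹) = (1 + u) * (t + 1) ^ 2 := by
      rw [hu]
      have h4 : ((t:ℝ) + 1) ^ 2 ≠ 0 := by positivity
      field_simp
      ring
    congr 1
    rw [div_eq_iff (show ((t:ℝ) + 1) ^ 2 ≠ 0 by positivity), key]
  constructor
  · refine div_nonneg ?_ ht.le
    rw [hlog]
    exact Real.log_nonneg (by linarith)
  · have hle : Real.log (1 + u) ≤ u := by
      have := Real.log_le_sub_one_of_pos (show (0:ℝ) < 1 + u by linarith)
      linarith
    have : phi x t ≤ u / t := by
      rw [phi, hlog]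
      exact div_le_div_of_nonneg_right hle ht.le
    refine this.trans (le_of_eq ?_)
    rw [hu]
    field_simp

lemma phi_contOn {x : ℝ} (hx : 0 < x) : ContinuousOn (phi x) (Set.Ioi 0) := by
  intro t ht
  have ht' : (0:ℝ) < t := ht
  apply ContinuousAt.continuousWithinAt
  apply ContinuousAt.div _ continuousAt_id ht'.ne'
  have h1 : ContinuousAt (fun t : ℝ => Real.log (t + x)) t :=
    (Real.continuousAt_log (by positivity)).comp (continuousAt_id.add continuousAt_const)
  have h2 : ContinuousAt (fun t : ℝ => Real.log (t + x⁻¹)) t :=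
    (Real.continuousAt_log (by positivity)).comp (continuousAt_id.add continuousAt_const)
  have h3 : ContinuousAt (fun t : ℝ => Real.log (t + 1)) t :=
    (Real.continuousAt_log (by positivity)).comp (continuousAt_id.add continuousAt_const)
  exact (h1.add h2).sub (continuousAt_const.mul h3)

lemma integrableOn_inv_sq {c : ℝ} (hc : 0 < c) :
    IntegrableOn (fun t : ℝ => ((t + c) ^ 2)⁻¹) (Set.Ioi 0) := by
  have hderiv : ∀ t ∈ Set.Ici (0:ℝ), HasDerivAt (fun s : ℝ => -(s + c)⁻¹) (((t + c) ^ 2)⁻¹) t := by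
    intro t ht
    have h : (0:ℝ) < t + c := by have := ht.out; linarith
    have h2 := (((hasDerivAt_id t).add_const c).inv h.ne').neg
    convert (show HasDerivAt (fun s : ℝ => -(s + c)⁻¹) _ t from h2) using 1
    field_simp
    simp only [id_eq]
    rw [div_self (by positivity)]
  have h3 : Tendsto (fun s : ℝ => s + c) atTop atTop := tendsto_atTop_add_const_right _ c tendsto_id
  have h4 : Tendsto (fun s : ℝ => -(s + c)⁻¹) atTop (nhds 0) := by
    simpa using (tendsto_inv_atTop_zero.comp h3).neg
  exact integrableOn_Ioi_deriv_of_nonneg' (l := 0) hderiv (fun t ht => by positivity) h4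

lemma phi_integrableOn {x : ℝ} (hx : 0 < x) : IntegrableOn (phi x) (Set.Ioi 0) := by
  have hmeas : AEStronglyMeasurable (phi x) (volume.restrict (Set.Ioi 0)) :=
    (phi_contOn hx).aestronglyMeasurable measurableSet_Ioi
  refine Integrable.mono' ((integrableOn_inv_sq one_pos).const_mul (x + x⁻¹ - 2)) hmeas ?_
  refine (ae_restrict_iff' measurableSet_Ioi).mpr (Filter.Eventually.of_forall fun t ht => ?_)
  obtain ⟨h0, h1⟩ := phi_bounds hx ht
  rw [Real.norm_eq_abs, abs_of_nonneg h0]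
  exact h1

noncomputable def Fd (y t : ℝ) : ℝ := (y ^ 2 - 1) / (y * (t + y) * (y * t + 1))

lemma J_hasDeriv {x₀ : ℝ} (hx : 0 < x₀) :
    IntegrableOn (Fd x₀) (Set.Ioi 0) ∧
      HasDerivAt (fun y => ∫ t in Set.Ioi (0:ℝ), phi y t)
        (∫ t in Set.Ioi (0:ℝ), Fd x₀ t) x₀ := by
  obtain ⟨δ, hδ⟩ : ∃ d : ℝ, d = x₀ / 2 := ⟨_, rfl⟩
  obtain ⟨M, hM⟩ : ∃ d : ℝ, d = x₀ + x₀ / 2 := ⟨_, rfl⟩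
  obtain ⟨m, hm⟩ : ∃ d : ℝ, d = min δ δ⁻¹ := ⟨_, rfl⟩
  obtain ⟨K, hK⟩ : ∃ d : ℝ, d = (M ^ 2 + 1) / δ ^ 2 := ⟨_, rfl⟩
  have hδ0 : 0 < δ := by rw [hδ]; positivity
  have hm0 : 0 < m := hm ▸ lt_min hδ0 (inv_pos.mpr hδ0)
  have hmδ : m ≤ δ := hm ▸ min_le_left _ _
  have hmδi : m ≤ δ⁻¹ := hm ▸ min_le_right _ _
  have hball : ∀ y ∈ Metric.ball x₀ δ, δ < y ∧ y < M := by
    intro y hy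
    rw [Metric.mem_ball, Real.dist_eq, abs_sub_lt_iff] at hy
    exact ⟨by linarith [hy.1, hy.2], by linarith [hy.1, hy.2]⟩
  have key := hasDerivAt_integral_of_dominated_loc_of_deriv_le (μ := volume.restrict (Set.Ioi 0))
    (F := fun y t => phi y t) (F' := fun y t => Fd y t)
    (x₀ := x₀) (s := Metric.ball x₀ δ) (bound := fun t => K * ((t + m) ^ 2)⁻¹)
      (Metric.ball_mem_nhds x₀ hδ0)
    ?meas ?int ?meas' ?bnd ?bint ?diff
  · exact key
  case meas =>
    filter_upwards [Ioi_mem_nhds hx] with y hy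
    exact ((phi_contOn hy).aestronglyMeasurable measurableSet_Ioi)
  case int => exact phi_integrableOn hx
  case meas' =>
    refine ContinuousOn.aestronglyMeasurable (fun t ht => ?_) measurableSet_Ioi
    have ht' : (0:ℝ) < t := ht
    refine ContinuousAt.continuousWithinAt ?_
    refine ContinuousAt.div continuousAt_const ?_ ?_
    · fun_prop
    · have : 0 < x₀ * (t + x₀) * (x₀ * t + 1) := by
        have := mul_pos hx ht'
        apply mul_pos (mul_pos hx (by linarith)) (by linarith)
      exact this.ne'
  case bnd =>
    refine (ae_restrict_iff' measurableSet_Ioi).mpr (Filter.Eventually.of_forall fun t ht => ?_)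
    intro y hy
    have ht' : (0:ℝ) < t := ht
    obtain ⟨hy1, hy2⟩ := hball y hy
    have hy0 : 0 < y := hδ0.trans hy1
    have htm : 0 < t + m := by linarith
    have hden : δ * (t + m) * (δ * (t + m)) ≤ y * (t + y) * (y * t + 1) := by
      have h2 : δ * (t + m) ≤ y * t + 1 := by
        have h2a : δ * (t + m) ≤ δ * (t + δ⁻¹) := by nlinarith
        have h2b : δ * (t + δ⁻¹) = δ * t + 1 := by
          rw [mul_add, mul_inv_cancel₀ hδ0.ne']
        nlinarith
      have h3 : δ * (t + m) ≤ y * (t + y) := by nlinarith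
      exact mul_le_mul h3 h2 (mul_pos hδ0 htm).le
        (mul_pos hy0 (by linarith : (0:ℝ) < t + y)).le
    have hytpos : 0 < y * t + 1 := by nlinarith
    have hdenpos : 0 < y * (t + y) * (y * t + 1) :=
      mul_pos (mul_pos hy0 (by linarith)) hytpos
    simp only [Fd]
    rw [Real.norm_eq_abs, abs_div, abs_of_pos hdenpos]
    have hnum : |y ^ 2 - 1| ≤ M ^ 2 + 1 := by
      rw [abs_le]
      constructor <;> nlinarith
    calc |y ^ 2 - 1| / (y * (t + y) * (y * t + 1))
        ≤ (M ^ 2 + 1) / (δ * (t + m) * (δ * (t + m))) :=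
          div_le_div₀ (by positivity) hnum (by positivity) hden
      _ = K * ((t + m) ^ 2)⁻¹ := by
          rw [hK, ← div_eq_mul_inv, div_div,
            show δ * (t + m) * (δ * (t + m)) = δ ^ 2 * (t + m) ^ 2 from by ring]
  case bint => exact (integrableOn_inv_sq hm0).const_mul K
  case diff =>
    refine (ae_restrict_iff' measurableSet_Ioi).mpr (Filter.Eventually.of_forall fun t ht => ?_)
    intro y hy
    have ht' : (0:ℝ) < t := ht
    obtain ⟨hy1, hy2⟩ := hball y hy
    have hy0 : 0 < y := hδ0.trans hy1
    have hty : (0:ℝ) < t + y := by linarith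
    have htyi : (0:ℝ) < t + y⁻¹ := add_pos ht' (inv_pos.mpr hy0)
    have d1 : HasDerivAt (fun y : ℝ => Real.log (t + y)) (1 / (t + y)) y := by
      simpa using (((hasDerivAt_id y).const_add t).log hty.ne')
    have d2 : HasDerivAt (fun y : ℝ => Real.log (t + y⁻¹)) ((-(y ^ 2)⁻¹) / (t + y⁻¹)) y :=
      ((hasDerivAt_inv hy0.ne').const_add t).log htyi.ne'
    have d3 := ((d1.add d2).sub (hasDerivAt_const y (2 * Real.log (t + 1)))).div_const t
    show HasDerivAt (fun y => phi y t) (Fd y t) y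
    convert (show HasDerivAt (fun y => phi y t) _ y from d3) using 1
    simp only [Fd]
    field_simp
    ring

lemma Fd_integral {x₀ : ℝ} (hx : 0 < x₀) (hint : IntegrableOn (Fd x₀) (Set.Ioi 0)) :
    ∫ t in Set.Ioi (0:ℝ), Fd x₀ t = 2 * Real.log x₀ / x₀ := by
  have hlim : Tendsto (fun t : ℝ => x₀⁻¹ * (Real.log (x₀ * t + 1) - Real.log (t + x₀)))
      atTop (nhds (x₀⁻¹ * Real.log x₀)) := by
    have hr : Tendsto (fun t : ℝ => (x₀ * t + 1) / (t + x₀)) atTop (nhds x₀) := by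
      have h1 : Tendsto (fun t : ℝ => (x₀ + t⁻¹) / (1 + x₀ * t⁻¹)) atTop (nhds x₀) := by
        have hnum : Tendsto (fun t : ℝ => x₀ + t⁻¹) atTop (nhds x₀) := by
          simpa using tendsto_inv_atTop_zero.const_add x₀
        have hden : Tendsto (fun t : ℝ => 1 + x₀ * t⁻¹) atTop (nhds 1) := by
          simpa using (tendsto_inv_atTop_zero.const_mul x₀).const_add 1
        have := hnum.div hden one_ne_zero
        rw [div_one] at this
        exact this
      refine h1.congr' ?_
      filter_upwards [eventually_gt_atTop (0:ℝ)] with t ht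
      rw [div_eq_div_iff (by positivity) (by positivity)]
      field_simp
    have hlog : Tendsto (fun t : ℝ => Real.log ((x₀ * t + 1) / (t + x₀))) atTop
        (nhds (Real.log x₀)) := ((Real.continuousAt_log hx.ne').tendsto).comp hr
    refine (hlog.const_mul x₀⁻¹).congr' ?_
    filter_upwards [eventually_gt_atTop (0:ℝ)] with t ht
    rw [Real.log_div (by positivity) (by positivity)]
  have hderiv : ∀ t ∈ Set.Ici (0:ℝ),
      HasDerivAt (fun t : ℝ => x₀⁻¹ * (Real.log (x₀ * t + 1) - Real.log (t + x₀)))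
        (Fd x₀ t) t := by
    intro t ht
    have ht' : (0:ℝ) ≤ t := ht
    have h1 : (0:ℝ) < x₀ * t + 1 := by nlinarith
    have h2 : (0:ℝ) < t + x₀ := by linarith
    have e1 : HasDerivAt (fun t : ℝ => Real.log (x₀ * t + 1)) (x₀ / (x₀ * t + 1)) t := by
      have := (((hasDerivAt_id t).const_mul x₀).add_const 1).log h1.ne'
      simpa using this
    have e2 : HasDerivAt (fun t : ℝ => Real.log (t + x₀)) (1 / (t + x₀)) t := by
      simpa using ((hasDerivAt_id t).add_const x₀).log h2.ne'
    have e3 := (e1.sub e2).const_mul x₀⁻¹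
    convert (show HasDerivAt (fun t : ℝ => x₀⁻¹ * (Real.log (x₀ * t + 1) - Real.log (t + x₀))) _ t from e3) using 1
    simp only [Fd]
    field_simp
    ring
  have := integral_Ioi_of_hasDerivAt_of_tendsto' hderiv hint hlim
  rw [this]
  rw [show x₀ * 0 + 1 = (1:ℝ) by ring, Real.log_one]
  field_simp
  ring

lemma J_eq {x : ℝ} (hx : 0 < x) :
    ∫ t in Set.Ioi (0:ℝ), phi x t = (Real.log x) ^ 2 := by
  set g : ℝ → ℝ := fun y => (∫ t in Set.Ioi (0:ℝ), phi y t) - (Real.log y) ^ 2 with hg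
  have hgderiv : ∀ y ∈ Set.uIcc x 1, HasDerivAt g 0 y := by
    intro y hy
    have hy0 : 0 < y := by
      rcases Set.mem_uIcc.mp hy with h | h
      · rcases le_or_gt x 1 with h1 | h1
        · exact lt_of_lt_of_le hx h.1
        · linarith [h.1, h.2]
      · linarith [h.1]
    obtain ⟨hint, hD⟩ := J_hasDeriv hy0
    rw [Fd_integral hy0 hint] at hD
    have hlog : HasDerivAt (fun y : ℝ => (Real.log y) ^ 2)
        (2 * Real.log y ^ 1 * y⁻¹) y := by
      simpa using (Real.hasDerivAt_log hy0.ne').fun_pow 2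
    have := hD.sub hlog
    convert (show HasDerivAt g _ y from this) using 1
    rw [pow_one]
    field_simp
    ring
  have hzero : (0:ℝ) = g 1 - g x := by
    have h := intervalIntegral.integral_eq_sub_of_hasDerivAt hgderiv
      (intervalIntegrable_const (c := (0:ℝ)))
    simpa using h
  have hg1 : g 1 = 0 := by
    have hphi1 : ∀ t : ℝ, phi 1 t = 0 := by
      intro t
      simp only [phi, inv_one]
      ring
    rw [hg]
    simp only [hphi1, Real.log_one]
    simp
  have : g x = 0 := by rw [← hg1]; linarith [hzero]
  have := sub_eq_zero.mp this
  exact this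

lemma sum_phi_mono {n : ℕ} {a b : Fin n → ℝ} (ha : ∀ i, 0 < a i) (hb : ∀ i, 0 < b i)
    (hab : ∀ t : ℝ, 0 ≤ t → ∏ i, (a i + t) ≤ ∏ i, (b i + t))
    (hab' : ∀ t : ℝ, 0 ≤ t → ∏ i, ((a i)⁻¹ + t) ≤ ∏ i, ((b i)⁻¹ + t))
    {t : ℝ} (ht : 0 < t) : ∑ i, phi (a i) t ≤ ∑ i, phi (b i) t := by
  simp only [phi]
  rw [← Finset.sum_div, ← Finset.sum_div]
  refine div_le_div_of_nonneg_right ?_ ht.le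
  have sum_logs : ∀ x : Fin n → ℝ, (∀ i, 0 < x i) →
      ∑ i, (Real.log (t + x i) + Real.log (t + (x i)⁻¹) - 2 * Real.log (t + 1))
        = Real.log (∏ i, (x i + t)) + Real.log (∏ i, ((x i)⁻¹ + t))
            - n * (2 * Real.log (t + 1)) := by
    intro x hx
    rw [Finset.sum_sub_distrib, Finset.sum_add_distrib, Finset.sum_const]
    rw [Real.log_prod (fun i _ => by have := hx i; positivity),
      Real.log_prod (fun i _ => by have := hx i; positivity)]
    simp only [Finset.card_univ, Fintype.card_fin, nsmul_eq_mul]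
    congr 1
    · congr 1
      · exact Finset.sum_congr rfl fun i _ => by rw [add_comm]
      · exact Finset.sum_congr rfl fun i _ => by rw [add_comm]
  rw [sum_logs a ha, sum_logs b hb]
  have hpa : (0:ℝ) < ∏ i, (a i + t) := Finset.prod_pos fun i _ => by have := ha i; positivity
  have hpa' : (0:ℝ) < ∏ i, ((a i)⁻¹ + t) :=
    Finset.prod_pos fun i _ => by have := ha i; positivity
  have l1 := Real.log_le_log hpa (hab t ht.le)
  have l2 := Real.log_le_log hpa' (hab' t ht.le)
  linarith

lemma sum_sq_log_le (n : ℕ) (a b : Fin n → ℝ) (ha : ∀ i, 0 < a i) (hb : ∀ i, 0 < b i)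
    (hab : ∀ t : ℝ, 0 ≤ t → ∏ i, (a i + t) ≤ ∏ i, (b i + t))
    (hab' : ∀ t : ℝ, 0 ≤ t → ∏ i, ((a i)⁻¹ + t) ≤ ∏ i, ((b i)⁻¹ + t)) :
    ∑ i, (Real.log (a i)) ^ 2 ≤ ∑ i, (Real.log (b i)) ^ 2 := by
  have expand : ∀ x : Fin n → ℝ, (∀ i, 0 < x i) →
      ∑ i, (Real.log (x i)) ^ 2 = ∫ t in Set.Ioi (0:ℝ), ∑ i, phi (x i) t := by
    intro x hx
    rw [integral_finset_sum _ (fun i _ => phi_integrableOn (hx i))]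
    exact Finset.sum_congr rfl fun i _ => (J_eq (hx i)).symm
  rw [expand a ha, expand b hb]
  refine setIntegral_mono_on
    (integrable_finset_sum _ (fun i _ => phi_integrableOn (ha i)))
    (integrable_finset_sum _ (fun i _ => phi_integrableOn (hb i)))
    measurableSet_Ioi (fun t ht => sum_phi_mono ha hb hab hab' ht)

end Analysis

/-- `δ_R(A,C)² = ∑ (log λᵢ(AC⁻¹))²`: the eigenvalues of `AC⁻¹` coincide with those of the
Hermitian matrix `C^{-1/2} A C^{-1/2}`, and the Frobenius norm of the matrix logarithm of a
Hermitian positive definite matrix equals the square root of the sum of squared logs of its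
eigenvalues. -/
theorem stmt_13 (n : ℕ) (A B C : Matrix (Fin n) (Fin n) ℂ)
    (hA : A.PosDef) (hB : B.PosDef) (hC : C.PosDef)
    (hHA : ((hC.inv.posSemidef.sqrt) * A * (hC.inv.posSemidef.sqrt)).IsHermitian)
    (hHB : ((hC.inv.posSemidef.sqrt) * B * (hC.inv.posSemidef.sqrt)).IsHermitian)
    (hE : ∀ k, 1 ≤ k → k ≤ n - 1 →
      esymm n k hHA.eigenvalues ≤ esymm n k hHB.eigenvalues)
    (hdet : (A * C⁻¹).det = (B * C⁻¹).det) :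
    Real.sqrt (∑ i, (Real.log (hHA.eigenvalues i)) ^ 2) ≤
      Real.sqrt (∑ i, (Real.log (hHB.eigenvalues i)) ^ 2) := by
  set S : Matrix (Fin n) (Fin n) ℂ := hC.inv.posSemidef.sqrt with hSdef
  have hS : S.PosSemidef := hC.inv.posSemidef.posSemidef_sqrt
  have hSH : Sᴴ = S := hS.1
  have hSS : S * S = C⁻¹ := hC.inv.posSemidef.sqrt_mul_self
  have hdetS : S.det * S.det = C⁻¹.det := by rw [← det_mul, hSS]
  have hdetS0 : S.det ≠ 0 := by
    intro h
    have := hC.inv.det_pos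
    rw [← hSS, det_mul, h, mul_zero] at this
    exact lt_irrefl _ this
  have hSinj : Function.Injective S.mulVec :=
    Matrix.mulVec_injective_iff_isUnit.mpr ((isUnit_iff_isUnit_det S).mpr hdetS0.isUnit)
  -- positive definiteness of the conjugated matrices
  have posdef_conj : ∀ (M : Matrix (Fin n) (Fin n) ℂ), M.PosDef →
      (S * M * S).IsHermitian → (S * M * S).PosDef := by
    intro M hM hHerm
    rw [show S * M * S = Sᴴ * M * S from by rw [hSH]]
    exact hM.conjTranspose_mul_mul_same hSinj
  have hSAS : (S * A * S).PosDef := posdef_conj A hA hHA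
  have hSBS : (S * B * S).PosDef := posdef_conj B hB hHB
  have hapos : ∀ i, 0 < hHA.eigenvalues i := fun i => hSAS.eigenvalues_pos i
  have hbpos : ∀ i, 0 < hHB.eigenvalues i := fun i => hSBS.eigenvalues_pos i
  -- equality of products of eigenvalues
  have hdet_conj : ∀ (M : Matrix (Fin n) (Fin n) ℂ), (S * M * S).det = (M * C⁻¹).det := by
    intro M
    rw [det_mul, det_mul, det_mul, ← hSS, det_mul]
    ring
  have h3 := (hHA.det_eq_prod_eigenvalues).symm.trans
    (((hdet_conj A).trans (hdet.trans (hdet_conj B).symm)).trans hHB.det_eq_prod_eigenvalues)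
  have hprod : ∏ i, hHA.eigenvalues i = ∏ i, hHB.eigenvalues i := by exact_mod_cast h3
  refine Real.sqrt_le_sqrt ?_
  exact sum_sq_log_le n hHA.eigenvalues hHB.eigenvalues hapos hbpos
    (fun t ht => prod_add_le n _ _ hE hprod ht)
    (fun t ht => prod_add_inv_le n _ _ hapos hbpos hE hprod ht)
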